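/- Let k = k'·d and r = r'·d be positive integers with k' ≥ 3, r' ≥ 3 (note gcd requirement below), where gcd(k', r') = 1. Let H' be a (k-1)-uniform hypergraph on n-2 vertices containing no r' edges spanning at most 2k-2 vertices. Let x, y be two new vertices, and define the k-uniform hypergraph H on V(H') ∪ {x, y} with edge set {e : |e| = k, x ∈ e} ∪ {e ∪ {y} : e ∈ E(H')}. Then H contains no r-regular subgraph. -/
import Mathlib


/-- A hypergraph `H` has an `r`-regular subgraph if some nonempty collection of its
edges covers every vertex of its span exactly `r` times. -/
def HasRegularSubgraph {α : Type*} [DecidableEq α] (H : Finset (Finset α)) (r : ℕ) : Prop :=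
  ∃ R : Finset (Finset α), R ⊆ H ∧ R.Nonempty ∧
    ∀ v ∈ R.biUnion id, (R.filter (fun e => v ∈ e)).card = r

/-- Let k = k'·d, r = r'·d with k', r' ≥ 3 and gcd(k', r') = 1. Let H' be a
(k-1)-uniform hypergraph avoiding two new vertices x, y, with no r' edges spanning at
most 2k-2 vertices. Then the hypergraph consisting of all k-sets containing x together
with the sets e ∪ {y}, e ∈ H', has no r-regular subgraph. -/
theorem stmt_12 {α : Type*} [Fintype α] [DecidableEq α] (k r k' r' d : ℕ)
    (hd : 0 < d) (hk' : 3 ≤ k') (hr' : 3 ≤ r')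
    (hk : k = k' * d) (hr : r = r' * d) (hgcd : Nat.gcd k' r' = 1)
    (x y : α) (hxy : x ≠ y)
    (H' : Finset (Finset α)) (hH'unif : ∀ e ∈ H', e.card = k - 1)
    (hH'x : ∀ e ∈ H', x ∉ e) (hH'y : ∀ e ∈ H', y ∉ e)
    (hspan : ¬ ∃ S ⊆ H', S.card = r' ∧ (S.biUnion id).card ≤ 2 * k - 2) :
    ¬ HasRegularSubgraph
        (((Finset.univ.powersetCard k).filter (fun s => x ∈ s)) ∪
          H'.image (insert y)) r := by
  rintro ⟨R, hRsub, hRne, hreg⟩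
  have hk3 : 3 ≤ k := by
    have := Nat.mul_le_mul hk' hd
    omega
  have hr3 : 3 ≤ r := by
    have := Nat.mul_le_mul hr' hd
    omega
  set T := R.biUnion id with hT
  -- membership dichotomy
  have hdich : ∀ e ∈ R, x ∈ e ∨ ∃ e' ∈ H', e = insert y e' := by
    intro e he
    rcases Finset.mem_union.mp (hRsub he) with h | h
    · exact Or.inl (Finset.mem_filter.mp h).2
    · obtain ⟨e', he', rfl⟩ := Finset.mem_image.mp h
      exact Or.inr ⟨e', he', rfl⟩
  -- all edges have card k
  have hcard : ∀ e ∈ R, e.card = k := by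
    intro e he
    rcases Finset.mem_union.mp (hRsub he) with h | h
    · exact (Finset.mem_powersetCard.mp (Finset.mem_filter.mp h).1).2
    · obtain ⟨e', he', rfl⟩ := Finset.mem_image.mp h
      rw [Finset.card_insert_of_notMem (hH'y e' he'), hH'unif e' he']
      omega
  -- double counting
  have hcount : k * R.card = r * T.card := by
    have key : ∑ e ∈ R, e.card = ∑ v ∈ T, (R.filter (fun e => v ∈ e)).card := by
      simp_rw [Finset.card_filter]
      rw [Finset.sum_comm]
      refine Finset.sum_congr rfl fun e he => ?_
      have hsub : e ⊆ T := fun v hv => Finset.mem_biUnion.mpr ⟨e, he, hv⟩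
      rw [← Finset.card_filter]
      congr 1
      ext v
      simp only [Finset.mem_filter]
      exact ⟨fun h => ⟨hsub h, h⟩, fun h => h.2⟩
    calc k * R.card = ∑ e ∈ R, e.card := by
          rw [Finset.sum_congr rfl hcard, Finset.sum_const, smul_eq_mul, mul_comm]
      _ = ∑ v ∈ T, (R.filter (fun e => v ∈ e)).card := key
      _ = ∑ v ∈ T, r := Finset.sum_congr rfl hreg
      _ = r * T.card := by rw [Finset.sum_const, smul_eq_mul, mul_comm]
  set A := R.filter (fun e => x ∈ e) with hA
  set B := R.filter (fun e => x ∉ e) with hB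
  have hABcard : A.card + B.card = R.card := Finset.card_filter_add_card_filter_not _
  set S := H'.filter (fun e => insert y e ∈ R) with hS
  have hBS : B = S.image (insert y) := by
    ext b
    simp only [hB, hS, Finset.mem_filter, Finset.mem_image]
    constructor
    · rintro ⟨hbR, hbx⟩
      rcases hdich b hbR with h | ⟨e', he', rfl⟩
      · exact absurd h hbx
      · exact ⟨e', ⟨he', hbR⟩, rfl⟩
    · rintro ⟨e', ⟨he', heR⟩, rfl⟩
      refine ⟨heR, ?_⟩
      simp only [Finset.mem_insert]
      push_neg
      exact ⟨hxy, hH'x e' he'⟩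
  have hScard : S.card = B.card := by
    rw [hBS]
    exact (Finset.card_image_of_injOn (fun e1 h1 e2 h2 heq => by
      have hy1 : y ∉ e1 := hH'y e1 (Finset.mem_filter.mp h1).1
      have hy2 : y ∉ e2 := hH'y e2 (Finset.mem_filter.mp h2).1
      have := congrArg (Finset.erase · y) heq
      simpa [Finset.erase_insert hy1, Finset.erase_insert hy2] using this)).symm
  rcases B.eq_empty_or_nonempty with hBe | hBne
  · -- B empty: all edges contain x, forcing R = {T} and r = 1, contradiction
    have hx : ∀ e ∈ R, x ∈ e := by
      intro e he
      by_contra h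
      have : e ∈ B := Finset.mem_filter.mpr ⟨he, h⟩
      rw [hBe] at this
      exact absurd this (Finset.notMem_empty e)
    obtain ⟨e0, he0⟩ := hRne
    have hxT : x ∈ T := Finset.mem_biUnion.mpr ⟨e0, he0, hx e0 he0⟩
    have hRfull : R.filter (fun e => x ∈ e) = R := Finset.filter_true_of_mem hx
    have hRr : R.card = r := by rw [← hRfull]; exact hreg x hxT
    have hTk : T.card = k := by
      have : r * k = r * T.card := by rw [← hcount, hRr, mul_comm]
      exact (Nat.eq_of_mul_eq_mul_left (by omega) this).symm
    have hall : ∀ e ∈ R, e = T := by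
      intro e he
      refine Finset.eq_of_subset_of_card_le (fun v hv => Finset.mem_biUnion.mpr ⟨e, he, hv⟩) ?_
      rw [hTk, hcard e he]
    have : R ⊆ {T} := fun e he => Finset.mem_singleton.mpr (hall e he)
    have := Finset.card_le_card this
    simp only [Finset.card_singleton] at this
    omega
  · -- B nonempty
    obtain ⟨b0, hb0⟩ := hBne
    have hb0y : y ∈ b0 := by
      rw [hBS] at hb0
      obtain ⟨e', _, rfl⟩ := Finset.mem_image.mp hb0
      exact Finset.mem_insert_self y e'
    have hyT : y ∈ T := Finset.mem_biUnion.mpr ⟨b0, (Finset.mem_filter.mp hb0).1, hb0y⟩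
    have hdegy : (R.filter (fun e => y ∈ e)).card = r := hreg y hyT
    have hBsuby : B ⊆ R.filter (fun e => y ∈ e) := by
      intro b hb
      have hbR := (Finset.mem_filter.mp hb).1
      rw [hBS] at hb
      obtain ⟨e', _, rfl⟩ := Finset.mem_image.mp hb
      exact Finset.mem_filter.mpr ⟨hbR, Finset.mem_insert_self y e'⟩
    have hBler : B.card ≤ r := hdegy ▸ Finset.card_le_card hBsuby
    -- cancel d in the counting identity
    have h1 : k' * R.card = r' * T.card := by
      apply Nat.eq_of_mul_eq_mul_right hd
      calc k' * R.card * d = k' * d * R.card := by ring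
        _ = r' * d * T.card := by rw [← hk, ← hr]; exact hcount
        _ = r' * T.card * d := by ring
    -- span of S
    set spanS := S.biUnion id with hspanS
    have hSsubT : spanS ⊆ T := by
      intro v hv
      obtain ⟨e, he, hve⟩ := Finset.mem_biUnion.mp hv
      have heR : insert y e ∈ R := (Finset.mem_filter.mp he).2
      exact Finset.mem_biUnion.mpr ⟨insert y e, heR, Finset.mem_insert_of_mem hve⟩
    have hySs : y ∉ spanS := by
      intro hv
      obtain ⟨e, he, hve⟩ := Finset.mem_biUnion.mp hv
      exact hH'y e (Finset.mem_filter.mp he).1 hve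
    have hxSs : x ∉ spanS := by
      intro hv
      obtain ⟨e, he, hve⟩ := Finset.mem_biUnion.mp hv
      exact hH'x e (Finset.mem_filter.mp he).1 hve
    -- case on A to get |A| and bound |T|, concluding |spanS| ≤ 2k-2 and r' ≤ |B|
    have hrdvdB : r' ∣ B.card ∧ spanS.card ≤ 2 * k - 2 := by
      rcases A.eq_empty_or_nonempty with hAe | hAne
      · have hRB : R.card = B.card := by rw [← hABcard, hAe]; simp
        rw [hRB] at h1
        have hdvd : r' ∣ k' * B.card := ⟨T.card, h1⟩
        have hcop : Nat.Coprime r' k' := Nat.coprime_comm.mp hgcd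
        refine ⟨hcop.dvd_of_dvd_mul_left hdvd, ?_⟩
        -- |T| ≤ k here
        have hTle : T.card ≤ k := by
          have : r' * T.card ≤ r' * k := by
            rw [← h1, hk]
            calc k' * B.card ≤ k' * r := Nat.mul_le_mul_left k' hBler
              _ = r' * (k' * d) := by rw [hr]; ring
          exact Nat.le_of_mul_le_mul_left this (by omega)
        have hsub : spanS ⊆ T.erase y := fun v hv =>
          Finset.mem_erase.mpr ⟨fun h => hySs (h ▸ hv), hSsubT hv⟩
        have := Finset.card_le_card hsub
        have := Finset.card_erase_of_mem hyT
        omega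
      · have hxT : x ∈ T := by
          obtain ⟨a0, ha0⟩ := hAne
          exact Finset.mem_biUnion.mpr ⟨a0, (Finset.mem_filter.mp ha0).1,
            (Finset.mem_filter.mp ha0).2⟩
        have hAr : A.card = r := hreg x hxT
        have hRcard : R.card = r + B.card := by omega
        rw [hRcard] at h1
        have hdvd : r' ∣ k' * B.card := by
          have h2 : r' * T.card = k' * r + k' * B.card := by rw [← h1]; ring
          have h3 : r' ∣ k' * r := by rw [hr]; exact ⟨k' * d, by ring⟩
          have h4 : r' ∣ r' * T.card := ⟨T.card, rfl⟩
          have h5 := Nat.dvd_sub h4 h3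
          have h6 : r' * T.card - k' * r = k' * B.card := by omega
          rwa [h6] at h5
        have hcop : Nat.Coprime r' k' := Nat.coprime_comm.mp hgcd
        refine ⟨hcop.dvd_of_dvd_mul_left hdvd, ?_⟩
        have hTle : T.card ≤ 2 * k := by
          have : r' * T.card ≤ r' * (2 * k) := by
            rw [← h1, hk]
            calc k' * (r + B.card) ≤ k' * (r + r) := by
                  exact Nat.mul_le_mul_left k' (by omega)
              _ = r' * (2 * (k' * d)) := by rw [hr]; ring
          exact Nat.le_of_mul_le_mul_left this (by omega)
        have hsub : spanS ⊆ (T.erase y).erase x := by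
          intro v hv
          refine Finset.mem_erase.mpr ⟨fun h => hxSs (h ▸ hv), Finset.mem_erase.mpr
            ⟨fun h => hySs (h ▸ hv), hSsubT hv⟩⟩
        have h5 := Finset.card_le_card hsub
        have h6 := Finset.card_erase_of_mem hyT
        have h7 : x ∈ T.erase y := Finset.mem_erase.mpr ⟨hxy, hxT⟩
        have h8 := Finset.card_erase_of_mem h7
        omega
    obtain ⟨hdvdB, hspanle⟩ := hrdvdB
    have hBpos : 0 < B.card := Finset.card_pos.mpr ⟨b0, hb0⟩
    have hrleB : r' ≤ B.card := Nat.le_of_dvd hBpos hdvdB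
    obtain ⟨S0, hS0sub, hS0card⟩ :=
      Finset.exists_subset_card_eq (show r' ≤ S.card by omega)
    refine hspan ⟨S0, hS0sub.trans (Finset.filter_subset _ _), hS0card, ?_⟩
    calc (S0.biUnion id).card ≤ spanS.card :=
          Finset.card_le_card (Finset.biUnion_subset_biUnion_of_subset_left _ hS0sub)
      _ ≤ 2 * k - 2 := hspanle
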